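/- Assume min{α₁, α₂, α₃} ≤ 0. Then the unit sphere S² is NOT a global attractor of the system in ℝ³ ∖ {0}: there exist x₀ ∈ ℝ³ ∖ {0} and a differentiable x : [0,∞) → ℝ³ with x'(t) = b(x(t)) for all t ≥ 0 and x(0) = x₀, such that ‖x(t)‖² does not tend to 1 as t → ∞. -/

import Mathlib

open scoped RealInnerProductSpace

/-- The cubic Kolmogorov vector field on `ℝ³` (modelled as `EuclideanSpace ℝ (Fin 3)`):
`b(x)₁ = x₁(α₁ − α₁x₁² − (α₁+α₂+d₁)x₂² + d₂x₃²)`,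
`b(x)₂ = x₂(α₂ + d₁x₁² − α₂x₂² − (α₂+α₃+d₃)x₃²)`,
`b(x)₃ = x₃(α₃ − (α₃+α₁+d₂)x₁² + d₃x₂² − α₃x₃²)`. -/
noncomputable def bVF (α₁ α₂ α₃ d₁ d₂ d₃ : ℝ) (x : EuclideanSpace ℝ (Fin 3)) :
    EuclideanSpace ℝ (Fin 3) :=
  (WithLp.equiv 2 (Fin 3 → ℝ)).symm
    ![x 0 * (α₁ - α₁ * (x 0)^2 - (α₁ + α₂ + d₁) * (x 1)^2 + d₂ * (x 2)^2),
      x 1 * (α₂ + d₁ * (x 0)^2 - α₂ * (x 1)^2 - (α₂ + α₃ + d₃) * (x 2)^2),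
      x 2 * (α₃ - (α₃ + α₁ + d₂) * (x 0)^2 + d₃ * (x 1)^2 - α₃ * (x 2)^2)]

noncomputable def U (c t : ℝ) : ℝ := Real.exp (c*t) / Real.sqrt (3 + Real.exp (c*t)^2)

lemma U_deriv (c t : ℝ) : HasDerivAt (U c) (c * U c t * (1 - (U c t)^2)) t := by
  have hpos : (0:ℝ) < 3 + Real.exp (c*t)^2 := by positivity
  have hS : Real.sqrt (3 + Real.exp (c*t)^2) > 0 := Real.sqrt_pos.mpr hpos
  have hS2 : Real.sqrt (3 + Real.exp (c*t)^2) ^ 2 = 3 + Real.exp (c*t)^2 :=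
    Real.sq_sqrt hpos.le
  have hA : HasDerivAt (fun t => Real.exp (c*t)) (Real.exp (c*t) * c) t := by
    simpa using ((hasDerivAt_id t).const_mul c).exp
  have hf : HasDerivAt (fun t => 3 + Real.exp (c*t)^2)
      (2 * Real.exp (c*t) ^ 1 * (Real.exp (c*t) * c)) t := (hA.pow 2).const_add 3
  have hsq : HasDerivAt (fun t => Real.sqrt (3 + Real.exp (c*t)^2))
      ((2 * Real.exp (c*t) ^ 1 * (Real.exp (c*t) * c)) / (2 * Real.sqrt (3 + Real.exp (c*t)^2))) t :=
    hf.sqrt (ne_of_gt hpos)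
  have := hA.div hsq (ne_of_gt hS)
  refine this.congr_deriv ?_
  unfold U
  set A := Real.exp (c*t) with hAdef
  set S := Real.sqrt (3 + A^2) with hSdef
  have hSne : S ≠ 0 := ne_of_gt hS
  field_simp

lemma U_zero (c : ℝ) : U c 0 = 1/2 := by
  simp [U]
  rw [show (3:ℝ) + 1 = 4 by norm_num, show (4:ℝ) = 2^2 by norm_num, Real.sqrt_sq (by norm_num)]

lemma U_sq_le (c : ℝ) (hc : c ≤ 0) (t : ℝ) (ht : 0 ≤ t) : (U c t)^2 ≤ 1/4 := by
  have hA : Real.exp (c*t) ≤ 1 := Real.exp_le_one_iff.mpr (mul_nonpos_of_nonpos_of_nonneg hc ht)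
  have hpos : (0:ℝ) < 3 + Real.exp (c*t)^2 := by positivity
  have hS2 : Real.sqrt (3 + Real.exp (c*t)^2) ^ 2 = 3 + Real.exp (c*t)^2 :=
    Real.sq_sqrt hpos.le
  unfold U
  rw [div_pow, hS2, div_le_div_iff₀ hpos (by norm_num)]
  nlinarith [Real.exp_pos (c*t)]

lemma main_aux (α₁ α₂ α₃ d₁ d₂ d₃ c : ℝ) (hc : c ≤ 0) (e : EuclideanSpace ℝ (Fin 3))
    (he : ‖e‖ = 1)
    (hb : ∀ u : ℝ, (c * u * (1 - u^2)) • e = bVF α₁ α₂ α₃ d₁ d₂ d₃ (u • e)) :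
    ∃ x : ℝ → EuclideanSpace ℝ (Fin 3), x 0 ≠ 0 ∧
      (∀ t : ℝ, 0 ≤ t → HasDerivAt x (bVF α₁ α₂ α₃ d₁ d₂ d₃ (x t)) t) ∧
      ¬ Filter.Tendsto (fun t => ‖x t‖ ^ 2) Filter.atTop (nhds 1) := by
  have henz : e ≠ 0 := by intro h; rw [h] at he; simp at he
  refine ⟨fun t => U c t • e, ?_, ?_, ?_⟩
  · simp only [U_zero]
    exact smul_ne_zero (by norm_num) henz
  · intro t _
    have := (U_deriv c t).smul_const e
    rwa [hb (U c t)] at this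
  · intro h
    have hev : ∀ᶠ t in Filter.atTop, (1:ℝ)/2 < ‖U c t • e‖^2 :=
      h.eventually (eventually_gt_nhds (by norm_num))
    obtain ⟨t, ht, ht0⟩ := (hev.and (Filter.eventually_ge_atTop 0)).exists
    have hnorm : ‖U c t • e‖^2 = (U c t)^2 := by
      rw [norm_smul, he, mul_one, Real.norm_eq_abs, sq_abs]
    rw [hnorm] at ht
    have := U_sq_le c hc t ht0
    linarith

/-- If `min αᵢ ≤ 0`, the unit sphere is not a global attractor in `ℝ³ \\ {0}`: there is
a solution starting at some `x₀ ≠ 0` whose squared norm does not tend to 1. -/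
theorem sphere_not_global_attractor (α₁ α₂ α₃ d₁ d₂ d₃ : ℝ)
    (hα : min α₁ (min α₂ α₃) ≤ 0) :
    ∃ x : ℝ → EuclideanSpace ℝ (Fin 3), x 0 ≠ 0 ∧
      (∀ t : ℝ, 0 ≤ t → HasDerivAt x (bVF α₁ α₂ α₃ d₁ d₂ d₃ (x t)) t) ∧
      ¬ Filter.Tendsto (fun t => ‖x t‖ ^ 2) Filter.atTop (nhds 1) := by
  rcases le_or_gt α₁ 0 with h1 | h1
  · apply main_aux α₁ α₂ α₃ d₁ d₂ d₃ α₁ h1 ((WithLp.equiv 2 (Fin 3 → ℝ)).symm ![1,0,0])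
    · simp [EuclideanSpace.norm_eq, Fin.sum_univ_three]
    · intro u
      ext i
      fin_cases i <;>
        simp [bVF, PiLp.smul_apply, smul_eq_mul] <;> ring
  rcases le_or_gt α₂ 0 with h2 | h2
  · apply main_aux α₁ α₂ α₃ d₁ d₂ d₃ α₂ h2 ((WithLp.equiv 2 (Fin 3 → ℝ)).symm ![0,1,0])
    · simp [EuclideanSpace.norm_eq, Fin.sum_univ_three]
    · intro u
      ext i
      fin_cases i <;>
        simp [bVF, PiLp.smul_apply, smul_eq_mul] <;> ring
  have h3 : α₃ ≤ 0 := by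
    rcases min_le_iff.mp hα with h | h
    · linarith
    rcases min_le_iff.mp h with h | h
    · linarith
    · exact h
  apply main_aux α₁ α₂ α₃ d₁ d₂ d₃ α₃ h3 ((WithLp.equiv 2 (Fin 3 → ℝ)).symm ![0,0,1])
  · simp [EuclideanSpace.norm_eq, Fin.sum_univ_three]
  · intro u
    ext i
    fin_cases i <;>
      simp [bVF, PiLp.smul_apply, smul_eq_mul] <;> ring
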